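/- Let V and H' be real separable Hilbert spaces with Hilbert bases (e_n)_{n∈ℕ} of V and (g_n)_{n∈ℕ} of H', let ν be a Borel probability measure on V with finite second moment, let S ⊆ V be a Borel set, let M > 0, and let Σ : S → H' be a Borel measurable map satisfying ‖Σ(T)‖_{H'} ≤ M for every T ∈ S. Then for every ε > 0 there exist d, m ∈ ℕ and a continuous function f : ℝ^d → ℝ^m such that the DeepONet F = E_{H',m} ∘ f ∘ P_{V,d} satisfies ∫_S ‖Σ(T) − F(T)‖_{H'}² dν(T) < ε. -/

import Mathlib

open MeasureTheory
open scoped RealInnerProductSpace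

/-- The projection map `P_{V,d} : V → ℝ^d`, `x ↦ (⟪x,e₁⟫, …, ⟪x,e_d⟫)`,
associated with a Hilbert basis `e` of `V`. -/
noncomputable def projMap {V : Type*} [NormedAddCommGroup V] [InnerProductSpace ℝ V]
    (e : HilbertBasis ℕ ℝ V) (d : ℕ) (x : V) : EuclideanSpace ℝ (Fin d) :=
  WithLp.toLp 2 (fun i : Fin d => ⟪x, e i⟫)

/-- The extension map `E_{H',m} : ℝ^m → H'`, `a ↦ ∑_{i=1}^m aᵢ gᵢ`,
associated with a Hilbert basis `g` of `H'`. -/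
noncomputable def extMap {H' : Type*} [NormedAddCommGroup H'] [InnerProductSpace ℝ H']
    (g : HilbertBasis ℕ ℝ H') (m : ℕ) (a : EuclideanSpace ℝ (Fin m)) : H' :=
  ∑ i : Fin m, a i • g i

open Filter
open scoped ENNReal NNReal BoundedContinuousFunction

/-- Bessel-type contraction: subtracting a partial Fourier expansion does not
increase the norm. -/
lemma partial_sum_contraction {E ι : Type*} [NormedAddCommGroup E] [InnerProductSpace ℝ E]
    {v : ι → E} (hv : Orthonormal ℝ v) (s : Finset ι) (x : E) :
    ‖x - ∑ i ∈ s, ⟪x, v i⟫ • v i‖ ≤ ‖x‖ := by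
  have h1 : ⟪x, ∑ i ∈ s, ⟪x, v i⟫ • v i⟫ = ∑ i ∈ s, ⟪x, v i⟫ ^ 2 := by
    rw [inner_sum]
    refine Finset.sum_congr rfl fun i _ => ?_
    rw [real_inner_smul_right]; ring
  have h2 : ‖∑ i ∈ s, ⟪x, v i⟫ • v i‖ ^ 2 = ∑ i ∈ s, ⟪x, v i⟫ ^ 2 := by
    rw [← real_inner_self_eq_norm_sq, hv.inner_sum]
    refine Finset.sum_congr rfl fun i _ => ?_
    simp [sq]
  have h3 : ‖x - ∑ i ∈ s, ⟪x, v i⟫ • v i‖ ^ 2 = ‖x‖ ^ 2 - ∑ i ∈ s, ⟪x, v i⟫ ^ 2 := by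
    rw [norm_sub_sq_real, h1, h2]; ring
  nlinarith [norm_nonneg (x - ∑ i ∈ s, ⟪x, v i⟫ • v i), norm_nonneg x,
    Finset.sum_nonneg (fun i (_ : i ∈ s) => sq_nonneg (⟪x, v i⟫))]

/-- `eLpNorm f 2 μ` raised to the power 2 is the integral of the squared norm. -/
lemma eLpNorm_two_rpow_two {α E : Type*} [MeasurableSpace α] [NormedAddCommGroup E]
    (μ : Measure α) (f : α → E) :
    (eLpNorm f 2 μ) ^ (2 : ℝ) = ∫⁻ x, (‖f x‖₊ : ℝ≥0∞) ^ (2 : ℝ) ∂μ := by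
  rw [eLpNorm_eq_lintegral_rpow_enorm_toReal two_ne_zero ENNReal.ofNat_ne_top]
  rw [← ENNReal.rpow_mul]
  norm_num
  rfl

/-- Dominated convergence for `eLpNorm _ 2 _`. -/
lemma tendsto_eLpNorm_two_zero {α E : Type*} [MeasurableSpace α] [NormedAddCommGroup E]
    {μ : Measure α} [IsFiniteMeasure μ] {h : ℕ → α → E}
    (hmeas : ∀ n, AEStronglyMeasurable (h n) μ) {C : ℝ}
    (hbd : ∀ n, ∀ᵐ x ∂μ, ‖h n x‖ ≤ C)
    (hlim : ∀ᵐ x ∂μ, Tendsto (fun n => h n x) atTop (nhds 0)) :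
    Tendsto (fun n => eLpNorm (h n) 2 μ) atTop (nhds 0) := by
  have hL : Tendsto (fun n => ∫⁻ x, (‖h n x‖₊ : ℝ≥0∞) ^ (2 : ℝ) ∂μ) atTop (nhds 0) := by
    have h0 : (0 : ℝ≥0∞) = ∫⁻ _x, (0 : ℝ≥0∞) ∂μ := by simp
    rw [h0]
    refine tendsto_lintegral_of_dominated_convergence'
      (fun _ => ENNReal.ofReal C ^ (2 : ℝ))
      (fun n => ((hmeas n).enorm).pow_const _) (fun n => ?_) ?_ ?_
    · filter_upwards [hbd n] with x hx
      refine ENNReal.rpow_le_rpow ?_ (by norm_num)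
      rw [← enorm_eq_nnnorm, ← ofReal_norm]
      exact ENNReal.ofReal_le_ofReal hx
    · rw [lintegral_const]
      exact ENNReal.mul_ne_top
        (ENNReal.rpow_ne_top_of_nonneg (by norm_num) ENNReal.ofReal_ne_top)
        (measure_ne_top μ _)
    · filter_upwards [hlim] with x hx
      have h1 : Tendsto (fun n => (‖h n x‖₊ : ℝ≥0∞)) atTop (nhds 0) := by
        simpa using ENNReal.tendsto_coe.2 hx.nnnorm
      have h2 := ((ENNReal.continuous_rpow_const (y := (2 : ℝ))).tendsto (0 : ℝ≥0∞)).comp h1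
      have h0 : ((0 : ℝ≥0∞) ^ (2 : ℝ)) = 0 := ENNReal.zero_rpow_of_pos (by norm_num)
      show Tendsto (fun n => (‖h n x‖₊ : ℝ≥0∞) ^ (2 : ℝ)) atTop (nhds 0)
      rw [← h0]
      exact h2
  have heq : (fun n => eLpNorm (h n) 2 μ)
      = fun n => (∫⁻ x, (‖h n x‖₊ : ℝ≥0∞) ^ (2 : ℝ) ∂μ) ^ (1 / 2 : ℝ) := by
    funext n
    rw [eLpNorm_eq_lintegral_rpow_enorm_toReal two_ne_zero ENNReal.ofNat_ne_top]
    norm_num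
    rfl
  rw [heq]
  have h2 := ((ENNReal.continuous_rpow_const (y := (1 / 2 : ℝ))).tendsto (0 : ℝ≥0∞)).comp hL
  have h0 : ((0 : ℝ≥0∞) ^ (1 / 2 : ℝ)) = 0 := ENNReal.zero_rpow_of_pos (by norm_num)
  rw [← h0]
  exact h2

/-- a bounded Borel measurable map defined on a Borel subset
`S` of a separable Hilbert space, with values in another separable Hilbert
space, can be approximated by DeepONets in the `L²(ν)` sense on `S`. -/
theorem stmt_14 (V H' : Type*) [NormedAddCommGroup V] [InnerProductSpace ℝ V]
    [NormedAddCommGroup H'] [InnerProductSpace ℝ H']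
    [MeasurableSpace V] [BorelSpace V]
    (e : HilbertBasis ℕ ℝ V) (g : HilbertBasis ℕ ℝ H')
    (ν : Measure V) [IsProbabilityMeasure ν]
    (hν : Integrable (fun x : V => ‖x‖ ^ 2) ν)
    (S : Set V) (hS : MeasurableSet S)
    (M : ℝ) (hM : 0 < M)
    (Sig : V → H') (hSigmeas : AEStronglyMeasurable Sig (ν.restrict S))
    (hSigbdd : ∀ T ∈ S, ‖Sig T‖ ≤ M)
    (ε : ℝ) (hε : 0 < ε) :
    ∃ (d m : ℕ) (f : EuclideanSpace ℝ (Fin d) → EuclideanSpace ℝ (Fin m)),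
      Continuous f ∧
      IntegrableOn (fun T : V => ‖Sig T - extMap g m (f (projMap e d T))‖ ^ 2) S ν ∧
      ∫ T in S, ‖Sig T - extMap g m (f (projMap e d T))‖ ^ 2 ∂ν < ε := by
  classical
  set μ : Measure V := ν.restrict S with hμdef
  haveI : IsFiniteMeasure μ := by
    refine ⟨?_⟩
    rw [hμdef, Measure.restrict_apply_univ]
    exact measure_lt_top ν S
  have hbM : ∀ᵐ T ∂μ, ‖Sig T‖ ≤ M := by
    rw [hμdef, ae_restrict_iff' hS]
    exact ae_of_all _ hSigbdd
  set η : ℝ := Real.sqrt (ε / 2) with hηdef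
  have hη : 0 < η := Real.sqrt_pos.2 (by linarith)
  -- coefficient functions
  set c : ℕ → V → ℝ := fun i T => ⟪Sig T, g i⟫ with hcdef
  have hcmeas : ∀ i, AEStronglyMeasurable (c i) μ := fun i =>
    hSigmeas.inner aestronglyMeasurable_const
  set P : ℕ → V → H' := fun m T => ∑ i ∈ Finset.range m, c i T • g i with hPdef
  have hPmeas : ∀ m, AEStronglyMeasurable (P m) μ := fun m =>
    Finset.aestronglyMeasurable_fun_sum _ fun i _ => (hcmeas i).smul_const _
  -- Step A : choose m
  have hA : Tendsto (fun m => eLpNorm (fun T => Sig T - P m T) 2 μ) atTop (nhds 0) := by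
    refine tendsto_eLpNorm_two_zero (C := M)
      (fun m => hSigmeas.sub (hPmeas m)) (fun m => ?_) ?_
    · filter_upwards [hbM] with T hT
      exact le_trans (partial_sum_contraction g.orthonormal (Finset.range m) (Sig T)) hT
    · refine ae_of_all _ fun T => ?_
      have h1 : Tendsto (fun m => P m T) atTop (nhds (Sig T)) := by
        have := (g.hasSum_repr (Sig T)).tendsto_sum_nat
        refine this.congr fun m => Finset.sum_congr rfl fun i _ => ?_
        rw [g.repr_apply_apply, real_inner_comm]
      have := tendsto_const_nhds (x := Sig T) (f := atTop (α := ℕ)) |>.sub h1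
      simpa using this
  have hAε : ∀ᶠ m in atTop, eLpNorm (fun T => Sig T - P m T) 2 μ < ENNReal.ofReal (η / 2) := by
    refine hA.eventually_lt_const ?_
    exact ENNReal.ofReal_pos.2 (by positivity)
  obtain ⟨m, hm⟩ := hAε.exists
  set δ : ℝ := η / (4 * ((m : ℝ) + 1)) with hδdef
  have hδ : 0 < δ := by positivity
  -- Step B : continuous approximations of the coefficients
  have hci : ∀ i : Fin m, MemLp (c i) 2 μ := by
    intro i
    refine MemLp.of_bound (hcmeas i) M ?_
    filter_upwards [hbM] with T hT
    calc ‖c i T‖ ≤ ‖Sig T‖ * ‖g (i : ℕ)‖ := norm_inner_le_norm _ _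
      _ = ‖Sig T‖ := by rw [g.orthonormal.1 (i : ℕ), mul_one]
      _ ≤ M := hT
  have hu : ∀ i : Fin m, ∃ u : V →ᵇ ℝ,
      eLpNorm (c i - (u : V → ℝ)) 2 μ ≤ ENNReal.ofReal δ ∧ MemLp (u : V → ℝ) 2 μ := fun i =>
    (hci i).exists_boundedContinuous_eLpNorm_sub_le ENNReal.ofNat_ne_top
      (ENNReal.ofReal_pos.2 hδ).ne'
  choose u hu1 _hu2 using hu
  -- Step C : choose d
  set ED : ℕ → V → V := fun d T => ∑ j ∈ Finset.range d, ⟪T, e j⟫ • e j with hEDdef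
  have hEDcont : ∀ d, Continuous (ED d) := fun d =>
    continuous_finset_sum _ fun j _ => (continuous_id.inner continuous_const).smul continuous_const
  have hEDlim : ∀ T, Tendsto (fun d => ED d T) atTop (nhds T) := by
    intro T
    have := (e.hasSum_repr T).tendsto_sum_nat
    refine this.congr fun d => Finset.sum_congr rfl fun j _ => ?_
    rw [e.repr_apply_apply, real_inner_comm]
  set w : Fin m → ℕ → V → ℝ := fun i d T => c i T - u i (ED d T) - (c i T - u i T) with hwdef
  have hwmeas : ∀ i d, AEStronglyMeasurable (w i d) μ := by
    intro i d
    have h1 : AEStronglyMeasurable (fun T => u i (ED d T)) μ :=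
      ((u i).continuous.comp (hEDcont d)).aestronglyMeasurable
    have h2 : AEStronglyMeasurable (fun T => u i T) μ := (u i).continuous.aestronglyMeasurable
    exact (((hcmeas i).sub h1).sub ((hcmeas i).sub h2))
  have hwbd : ∀ i d, ∀ᵐ T ∂μ, ‖w i d T‖ ≤ 2 * ‖u i‖ := by
    intro i d
    refine ae_of_all _ fun T => ?_
    have : w i d T = u i T - u i (ED d T) := by rw [hwdef]; ring
    rw [this]
    calc ‖u i T - u i (ED d T)‖ ≤ ‖u i T‖ + ‖u i (ED d T)‖ := norm_sub_le _ _
      _ ≤ ‖u i‖ + ‖u i‖ := add_le_add ((u i).norm_coe_le_norm T) ((u i).norm_coe_le_norm _)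
      _ = 2 * ‖u i‖ := by ring
  have hwlim : ∀ i, ∀ T, Tendsto (fun d => w i d T) atTop (nhds 0) := by
    intro i T
    have h1 : Tendsto (fun d => u i (ED d T)) atTop (nhds (u i T)) :=
      ((u i).continuous.tendsto T).comp (hEDlim T)
    have h2 := (tendsto_const_nhds (x := (u i T : ℝ)) (f := atTop (α := ℕ))).sub h1
    have : Tendsto (fun d => u i T - u i (ED d T)) atTop (nhds 0) := by simpa using h2
    refine this.congr fun d => by rw [hwdef]; ring
  have hw : ∀ i : Fin m, Tendsto (fun d => eLpNorm (w i d) 2 μ) atTop (nhds 0) := fun i =>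
    tendsto_eLpNorm_two_zero (hwmeas i) (hwbd i) (ae_of_all _ (hwlim i))
  have hdε : ∀ᶠ d in atTop, ∀ i : Fin m, eLpNorm (w i d) 2 μ < ENNReal.ofReal δ := by
    rw [eventually_all]
    exact fun i => (hw i).eventually_lt_const (ENNReal.ofReal_pos.2 hδ)
  obtain ⟨d, hd⟩ := hdε.exists
  -- the approximating DeepONet
  refine ⟨d, m, fun a => WithLp.toLp 2 (fun i => u i (∑ j : Fin d, a j • e (j : ℕ))), ?_, ?_, ?_⟩
  · refine (PiLp.continuous_toLp 2 _).comp (continuous_pi fun i => (u i).continuous.comp ?_)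
    exact continuous_finset_sum _ fun j _ => ((continuous_apply (j : Fin d)).comp (PiLp.continuous_ofLp 2 _)).smul continuous_const
  all_goals {
  have key : ∀ T : V, extMap g m ((fun a => WithLp.toLp 2 (fun (i : Fin m) => u i (∑ j : Fin d, a j • e (j : ℕ))))
      (projMap e d T)) = ∑ i : Fin m, u i (ED d T) • g (i : ℕ) := by
    intro T
    simp only [extMap, projMap, PiLp.toLp_apply]
    refine Finset.sum_congr rfl fun i _ => ?_
    congr 1
    congr 1
    rw [hEDdef]
    exact Fin.sum_univ_eq_sum_range (fun j => ⟪T, e j⟫ • e j) d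
  have hFmeas : AEStronglyMeasurable (fun T => ∑ i : Fin m, u i (ED d T) • g (i : ℕ)) μ :=
    Finset.aestronglyMeasurable_fun_sum _ fun i _ =>
      (((u i).continuous.comp (hEDcont d)).aestronglyMeasurable).smul_const _
  have hdecomp : ∀ T : V, Sig T - ∑ i : Fin m, u i (ED d T) • g (i : ℕ)
      = (Sig T - P m T) + ∑ i : Fin m, (c i T - u i (ED d T)) • g (i : ℕ) := by
    intro T
    have hP : P m T = ∑ i : Fin m, c i T • g (i : ℕ) :=
      (Fin.sum_univ_eq_sum_range (fun i => c i T • g i) m).symm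
    rw [hP]
    simp only [sub_smul, Finset.sum_sub_distrib]
    abel
  -- the main eLpNorm estimate
  have hterm : ∀ i : Fin m,
      eLpNorm (fun T => (c i T - u i (ED d T)) • g (i : ℕ)) 2 μ
        ≤ ENNReal.ofReal δ + ENNReal.ofReal δ := by
    intro i
    have h1 : eLpNorm (fun T => (c i T - u i (ED d T)) • g (i : ℕ)) 2 μ
        = eLpNorm (fun T => c i T - u i (ED d T)) 2 μ := by
      refine eLpNorm_congr_norm_ae (ae_of_all _ fun T => ?_)
      rw [norm_smul, g.orthonormal.1 (i : ℕ), mul_one]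
    have h2 : (fun T => c i T - u i (ED d T))
        = fun T => (c i T - u i T) + w i d T := by
      funext T; rw [hwdef]; ring
    rw [h1, h2]
    refine le_trans (eLpNorm_add_le ((hcmeas i).sub (u i).continuous.aestronglyMeasurable)
      (hwmeas i d) one_le_two) ?_
    exact add_le_add (hu1 i) (hd i).le
  have hbound : eLpNorm (fun T => Sig T - ∑ i : Fin m, u i (ED d T) • g (i : ℕ)) 2 μ
      ≤ ENNReal.ofReal η := by
    have e1 : eLpNorm (fun T => Sig T - ∑ i : Fin m, u i (ED d T) • g (i : ℕ)) 2 μ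
        = eLpNorm (fun T => (Sig T - P m T)
            + ∑ i : Fin m, (c i T - u i (ED d T)) • g (i : ℕ)) 2 μ :=
      eLpNorm_congr_ae (Eventually.of_forall hdecomp)
    have hsummeas : ∀ i : Fin m,
        AEStronglyMeasurable (fun T => (c i T - u i (ED d T)) • g (i : ℕ)) μ := fun i =>
      (((hcmeas i).sub ((u i).continuous.comp (hEDcont d)).aestronglyMeasurable)).smul_const _
    have e2 : eLpNorm (fun T => ∑ i : Fin m, (c i T - u i (ED d T)) • g (i : ℕ)) 2 μ
        ≤ ∑ i : Fin m, eLpNorm (fun T => (c i T - u i (ED d T)) • g (i : ℕ)) 2 μ := by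
      have := eLpNorm_sum_le (μ := μ) (p := 2)
        (f := fun (i : Fin m) (T : V) => (c i T - u i (ED d T)) • g (i : ℕ))
        (s := Finset.univ) (fun i _ => hsummeas i) one_le_two
      refine le_trans (le_of_eq ?_) this
      refine eLpNorm_congr_ae (ae_of_all _ fun T => ?_)
      simp [Finset.sum_apply]
    calc eLpNorm (fun T => Sig T - ∑ i : Fin m, u i (ED d T) • g (i : ℕ)) 2 μ
        ≤ eLpNorm (fun T => Sig T - P m T) 2 μ
          + eLpNorm (fun T => ∑ i : Fin m, (c i T - u i (ED d T)) • g (i : ℕ)) 2 μ := by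
          rw [e1]
          exact eLpNorm_add_le (hSigmeas.sub (hPmeas m))
            (Finset.aestronglyMeasurable_fun_sum _ fun i _ => hsummeas i) one_le_two
      _ ≤ ENNReal.ofReal (η / 2)
          + ∑ _i : Fin m, (ENNReal.ofReal δ + ENNReal.ofReal δ) := by
          exact add_le_add hm.le (le_trans e2 (Finset.sum_le_sum fun i _ => hterm i))
      _ ≤ ENNReal.ofReal η := by
          rw [Finset.sum_const, Finset.card_univ, Fintype.card_fin, nsmul_eq_mul,
            ← ENNReal.ofReal_add hδ.le hδ.le, ← ENNReal.ofReal_natCast m,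
            ← ENNReal.ofReal_mul (Nat.cast_nonneg m), ← ENNReal.ofReal_add (by positivity)
              (by positivity)]
          refine ENNReal.ofReal_le_ofReal ?_
          have h3 : (0 : ℝ) < 4 * ((m : ℝ) + 1) := by positivity
          have hδval : δ * (4 * ((m : ℝ) + 1)) = η := div_mul_cancel₀ _ h3.ne'
          nlinarith [hη.le, hδ.le, Nat.cast_nonneg (α := ℝ) m]
  have hFfull : (fun T : V => Sig T - extMap g m ((fun a => WithLp.toLp 2 (fun (i : Fin m) =>
      u i (∑ j : Fin d, a j • e (j : ℕ)))) (projMap e d T)))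
      = fun T => Sig T - ∑ i : Fin m, u i (ED d T) • g (i : ℕ) := by
    funext T; rw [key T]
  have hmem : MemLp (fun T => Sig T - ∑ i : Fin m, u i (ED d T) • g (i : ℕ)) 2 μ :=
    ⟨hSigmeas.sub hFmeas, lt_of_le_of_lt hbound ENNReal.ofReal_lt_top⟩
  have hsqle : ∫⁻ T, (‖Sig T - ∑ i : Fin m, u i (ED d T) • g (i : ℕ)‖₊ : ℝ≥0∞) ^ (2 : ℝ) ∂μ
      ≤ ENNReal.ofReal (ε / 2) := by
    rw [← eLpNorm_two_rpow_two]
    calc (eLpNorm (fun T => Sig T - ∑ i : Fin m, u i (ED d T) • g (i : ℕ)) 2 μ) ^ (2 : ℝ)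
        ≤ (ENNReal.ofReal η) ^ (2 : ℝ) := ENNReal.rpow_le_rpow hbound (by norm_num)
      _ = ENNReal.ofReal (η ^ (2 : ℝ)) :=
          ENNReal.ofReal_rpow_of_nonneg hη.le (by norm_num)
      _ = ENNReal.ofReal (ε / 2) := by
          rw [Real.rpow_two, hηdef, Real.sq_sqrt (by linarith)]
  have hintR : Integrable (fun T => ‖Sig T - ∑ i : Fin m, u i (ED d T) • g (i : ℕ)‖ ^ 2) μ := by
    have := hmem.integrable_norm_rpow two_ne_zero ENNReal.ofNat_ne_top
    have h2 : ((2 : ℝ≥0∞).toReal) = (2 : ℝ) := by norm_num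
    rw [h2] at this
    refine this.congr (ae_of_all _ fun T => ?_)
    beta_reduce
    rw [Real.rpow_two]
  -- finish both remaining goals
  first
  | · -- integrability
      show IntegrableOn _ S ν
      refine hintR.congr (ae_of_all _ fun T => ?_)
      beta_reduce
      rw [key T]
  | · -- integral bound
      have hmeas2 : AEStronglyMeasurable
          (fun T => ‖Sig T - ∑ i : Fin m, u i (ED d T) • g (i : ℕ)‖ ^ 2) μ := hintR.1
      have hint_eq : ∫ T, ‖Sig T - extMap g m ((fun a => WithLp.toLp 2 (fun (i : Fin m) =>
          u i (∑ j : Fin d, a j • e (j : ℕ)))) (projMap e d T))‖ ^ 2 ∂μ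
          = ∫ T, ‖Sig T - ∑ i : Fin m, u i (ED d T) • g (i : ℕ)‖ ^ 2 ∂μ := by
        refine integral_congr_ae (ae_of_all _ fun T => ?_)
        beta_reduce
        rw [key T]
      rw [hint_eq]
      have hpos : ∫ T, ‖Sig T - ∑ i : Fin m, u i (ED d T) • g (i : ℕ)‖ ^ 2 ∂μ
          = (∫⁻ T, ENNReal.ofReal (‖Sig T - ∑ i : Fin m, u i (ED d T) • g (i : ℕ)‖ ^ 2) ∂μ).toReal :=
        integral_eq_lintegral_of_nonneg_ae (ae_of_all _ fun T => sq_nonneg _) hmeas2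
      rw [hpos]
      have hlint_eq : ∫⁻ T, ENNReal.ofReal (‖Sig T - ∑ i : Fin m, u i (ED d T) • g (i : ℕ)‖ ^ 2) ∂μ
          = ∫⁻ T, (‖Sig T - ∑ i : Fin m, u i (ED d T) • g (i : ℕ)‖₊ : ℝ≥0∞) ^ (2 : ℝ) ∂μ := by
        refine lintegral_congr fun T => ?_
        rw [ENNReal.ofReal_pow (norm_nonneg _), ofReal_norm,
          ← ENNReal.rpow_natCast]
        norm_num
        rfl
      rw [hlint_eq]
      calc (∫⁻ T, (‖Sig T - ∑ i : Fin m, u i (ED d T) • g (i : ℕ)‖₊ : ℝ≥0∞) ^ (2 : ℝ) ∂μ).toReal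
          ≤ (ENNReal.ofReal (ε / 2)).toReal :=
            ENNReal.toReal_mono ENNReal.ofReal_ne_top hsqle
        _ = ε / 2 := ENNReal.toReal_ofReal (by linarith)
        _ < ε := by linarith
  }
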